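/- If T is a tree whose order n is twice its independence number α (i.e., both partite sets of the bipartition have size α), then T has a perfect matching. -/

import Mathlib

open SimpleGraph

/-- A set of vertices is independent if its vertices are pairwise non-adjacent. -/
def SimpleGraph.IsIndepSet' {V : Type*} (G : SimpleGraph V) (s : Set V) : Prop :=
  s.Pairwise (fun u v => ¬ G.Adj u v)

/-- The independence number of a graph. -/
noncomputable def indepNum {V : Type*} (G : SimpleGraph V) : ℕ :=
  sSup {k | ∃ s : Finset V, G.IsIndepSet' ↑s ∧ s.card = k}

/-- The number of maximum independent sets of a graph. -/
noncomputable def numMaxIndep {V : Type*} (G : SimpleGraph V) : ℕ :=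
  {s : Finset V | G.IsIndepSet' ↑s ∧ s.card = _root_.indepNum G}.ncard

section Aux

variable {V : Type*}

lemma indep_bddAbove [Fintype V] (G : SimpleGraph V) :
    BddAbove {k | ∃ s : Finset V, G.IsIndepSet' ↑s ∧ s.card = k} :=
  ⟨Fintype.card V, fun k hk => by obtain ⟨s, _, rfl⟩ := hk; exact s.card_le_univ⟩

lemma card_le_indepNum [Fintype V] {G : SimpleGraph V} {s : Finset V}
    (hs : G.IsIndepSet' ↑s) : s.card ≤ _root_.indepNum G :=
  le_csSup (indep_bddAbove G) ⟨s, hs, rfl⟩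

lemma exists_indep_card [Fintype V] (G : SimpleGraph V) :
    ∃ s : Finset V, G.IsIndepSet' ↑s ∧ s.card = _root_.indepNum G := by
  have h0 : (0 : ℕ) ∈ {k | ∃ s : Finset V, G.IsIndepSet' ↑s ∧ s.card = k} :=
    ⟨∅, by simp [SimpleGraph.IsIndepSet'], by simp⟩
  exact Nat.sSup_mem ⟨0, h0⟩ (indep_bddAbove G)

lemma exists_leaf [Fintype V] {G : SimpleGraph V} (hG : G.IsAcyclic)
    (hne : ∃ u v, G.Adj u v) :
    ∃ u v, G.Adj u v ∧ ∀ x, G.Adj u x → x = v := by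
  classical
  set S : Set ℕ := {n | ∃ (u w : V) (p : G.Walk u w), p.IsPath ∧ p.length = n} with hS
  obtain ⟨a, b, hab⟩ := hne
  have h1 : 1 ∈ S := ⟨a, b, .cons hab .nil, by simp [hab.ne], rfl⟩
  have hbdd : BddAbove S := ⟨Fintype.card V, fun n hn => by
    obtain ⟨u, w, p, hp, rfl⟩ := hn; exact hp.length_lt.le⟩
  obtain ⟨u, w, p, hp, hlen⟩ := Nat.sSup_mem ⟨1, h1⟩ hbdd
  have hpos : 1 ≤ p.length := hlen ▸ le_csSup hbdd h1
  refine ⟨u, p.getVert 1, ?_, ?_⟩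
  · have := p.adj_getVert_succ (by omega : 0 < p.length)
    simpa using this
  · intro x hx
    by_cases hxs : x ∈ p.support
    · have ht : (p.takeUntil x hxs).IsPath := hp.takeUntil hxs
      have heq : (⟨p.takeUntil x hxs, ht⟩ : G.Path u x) = Path.singleton hx :=
        hG.path_unique _ _
      have hlen1 : (p.takeUntil x hxs).length = 1 := by
        have := congrArg (fun q : G.Path u x => q.1.length) heq
        simpa [Path.singleton] using this
      have hspec := p.take_spec hxs
      have hgv : p.getVert 1 = x := by
        conv_lhs => rw [← hspec]
        rw [Walk.getVert_append]
        simp [hlen1]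
      exact hgv.symm
    · exfalso
      have hq : (Walk.cons hx.symm p).IsPath := hp.cons hxs
      have hmem : (Walk.cons hx.symm p).length ∈ S := ⟨x, w, _, hq, rfl⟩
      have := le_csSup hbdd hmem
      simp only [Walk.length_cons] at this
      omega

universe u

lemma main_aux : ∀ (n : ℕ) (V : Type u) [Fintype V] (G : SimpleGraph V),
    G.IsAcyclic → Fintype.card V = n → Fintype.card V = 2 * _root_.indepNum G →
    ∃ M : G.Subgraph, M.IsPerfectMatching := by
  intro n
  induction n using Nat.strong_induction_on with
  | _ n ih =>
  intro V _ G hac hn h2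
  classical
  by_cases hE : ∃ u v, G.Adj u v
  swap
  · -- no edges: V must be empty
    have huniv : G.IsIndepSet' ↑(Finset.univ : Finset V) := by
      intro a _ b _ hne hadj
      exact hE ⟨a, b, hadj⟩
    have hle : Fintype.card V ≤ _root_.indepNum G := by
      simpa using card_le_indepNum huniv
    have hcard0 : Fintype.card V = 0 := by omega
    haveI : IsEmpty V := Fintype.card_eq_zero_iff.mp hcard0
    refine ⟨⊥, fun v hv => ?_, fun v => isEmptyElim v⟩
    simp [Subgraph.verts_bot] at hv
  · obtain ⟨u, v, huv, hleaf⟩ := exists_leaf hac hE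
    have hune : u ≠ v := huv.ne
    set α := _root_.indepNum G with hα
    have hα1 : 1 ≤ α := by
      have hs : G.IsIndepSet' ↑({u} : Finset V) := by
        simp [SimpleGraph.IsIndepSet']
      simpa using card_le_indepNum hs
    set s : Set V := {u, v}ᶜ with hsdef
    haveI : Fintype ↥s := Fintype.ofFinite ↥s
    -- cardinality of s
    have hcards : Fintype.card ↥s = Fintype.card V - 2 := by
      have h1 : Nat.card ↥s = s.ncard := (Nat.card_coe_set_eq s)
      have h2' : ({u, v} : Set V).ncard = 2 := Set.ncard_pair hune
      have h3 : ({u, v} : Set V).ncard + s.ncard = Nat.card V :=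
        Set.ncard_add_ncard_compl _ (Set.toFinite _)
      have h4 : Nat.card V = Fintype.card V := Nat.card_eq_fintype_card
      have h5 : Nat.card ↥s = Fintype.card ↥s := Nat.card_eq_fintype_card
      omega
    set G' : G.Subgraph := (⊤ : G.Subgraph).induce s with hG'
    set H : SimpleGraph ↥s := G'.coe with hH
    have hHadj : ∀ a b : ↥s, H.Adj a b ↔ G.Adj ↑a ↑b := by
      intro a b
      exact ⟨fun h => h.2.2, fun h => ⟨a.2, b.2, h⟩⟩
    -- H is acyclic
    have hHac : H.IsAcyclic := fun x c hc =>
      hac _ (hc.map (f := G'.hom) Subgraph.hom_injective)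
    -- _root_.indepNum H = α - 1
    obtain ⟨S, hS, hScard⟩ := exists_indep_card G
    have hT0 : α - 1 ≤ (S \ {u, v} : Finset V).card := by
      by_cases huS : u ∈ S
      · have : S \ {u, v} = S.erase u := by
          ext x
          simp only [Finset.mem_sdiff, Finset.mem_insert, Finset.mem_singleton,
            Finset.mem_erase]
          constructor
          · rintro ⟨hx, h⟩; exact ⟨fun h' => h (Or.inl h'), hx⟩
          · rintro ⟨hxu, hx⟩
            refine ⟨hx, ?_⟩
            rintro (rfl | rfl)
            · exact hxu rfl
            · exact hS (by simpa using huS) (by simpa using hx) hune huv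
        rw [this, Finset.card_erase_of_mem huS, hScard]
      · have : S \ {u, v} = S.erase v := by
          ext x
          simp only [Finset.mem_sdiff, Finset.mem_insert, Finset.mem_singleton,
            Finset.mem_erase]
          constructor
          · rintro ⟨hx, h⟩; exact ⟨fun h' => h (Or.inr h'), hx⟩
          · rintro ⟨hxv, hx⟩
            exact ⟨hx, by rintro (rfl | rfl); exacts [huS hx, hxv rfl]⟩
        rw [this]
        have := Finset.pred_card_le_card_erase (s := S) (a := v)
        omega
    set T1 : Finset ↥s := (S \ {u, v}).subtype (· ∈ s) with hT1def
    have hT1card : T1.card = (S \ {u, v}).card := by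
      rw [hT1def, Finset.card_subtype, Finset.filter_true_of_mem]
      intro x hx
      simp only [Finset.mem_sdiff, Finset.mem_insert, Finset.mem_singleton] at hx
      simp only [hsdef, Set.mem_compl_iff, Set.mem_insert_iff, Set.mem_singleton_iff]
      tauto
    have hT1indep : H.IsIndepSet' ↑T1 := by
      intro a ha b hb hne hadj
      have ha' : (a : V) ∈ S := by
        have : a ∈ T1 := ha
        rw [hT1def, Finset.mem_subtype] at this
        exact (Finset.mem_sdiff.mp this).1
      have hb' : (b : V) ∈ S := by
        have : b ∈ T1 := hb
        rw [hT1def, Finset.mem_subtype] at this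
        exact (Finset.mem_sdiff.mp this).1
      exact hS (by simpa using ha') (by simpa using hb')
        (fun h => hne (Subtype.val_injective h)) ((hHadj a b).mp hadj)
    have hHge : α - 1 ≤ _root_.indepNum H := by
      have := card_le_indepNum hT1indep
      omega
    -- upper bound
    obtain ⟨U, hU, hUcard⟩ := exists_indep_card H
    have hmem_s : ∀ x : ↥s, (x : V) ≠ u ∧ (x : V) ≠ v := by
      intro x
      refine ⟨fun h => x.2 ?_, fun h => x.2 ?_⟩
      · rw [h]; exact Set.mem_insert _ _
      · rw [h]; exact Set.mem_insert_iff.mpr (Or.inr rfl)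
    have hHle : _root_.indepNum H + 1 ≤ α := by
      set W : Finset V := insert u (U.image Subtype.val) with hW
      have hunotin : u ∉ U.image Subtype.val := by
        intro hmem
        obtain ⟨x, _, hxe⟩ := Finset.mem_image.mp hmem
        exact (hmem_s x).1 hxe
      have hWcard : W.card = U.card + 1 := by
        rw [hW, Finset.card_insert_of_notMem hunotin,
          Finset.card_image_of_injective _ Subtype.val_injective]
      have hWindep : G.IsIndepSet' ↑W := by
        intro a ha b hb hne hadj
        simp only [hW, Finset.coe_insert, Set.mem_insert_iff, Finset.coe_image,
          Set.mem_image, Finset.mem_coe] at ha hb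
        rcases ha with rfl | ⟨x, hx, rfl⟩
        · rcases hb with rfl | ⟨y, hy, rfl⟩
          · exact hne rfl
          · exact (hmem_s y).2 (hleaf _ hadj)
        · rcases hb with rfl | ⟨y, hy, rfl⟩
          · exact (hmem_s x).2 (hleaf _ hadj.symm)
          · refine hU (by simpa using hx) (by simpa using hy)
              (fun h => hne (congrArg _ h)) ((hHadj x y).mpr hadj)
      have := card_le_indepNum hWindep
      omega
    have hβ : _root_.indepNum H = α - 1 := by omega
    -- apply induction hypothesis
    have hn2 : 2 ≤ Fintype.card V := by omega
    obtain ⟨M, hMm, hMs⟩ := ih (Fintype.card ↥s) (by omega) ↥s H hHac rfl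
      (by rw [hβ]; omega)
    -- assemble the perfect matching
    have hMverts : (Subgraph.coeSubgraph M).verts = s := by
      erw [Subgraph.verts_coeSubgraph, hMs.verts_eq_univ]
      erw [Set.image_univ, Subtype.range_coe]
      rfl
    have hM1 : (Subgraph.coeSubgraph M).IsMatching := hMm.coeSubgraph
    have hM2 : (G.subgraphOfAdj huv).IsMatching := Subgraph.IsMatching.subgraphOfAdj huv
    have hdisj : Disjoint (Subgraph.coeSubgraph M).support (G.subgraphOfAdj huv).support := by
      rw [hM1.support_eq_verts, hM2.support_eq_verts, hMverts, subgraphOfAdj_verts]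
      exact disjoint_compl_left
    refine ⟨Subgraph.coeSubgraph M ⊔ G.subgraphOfAdj huv, hM1.sup hM2 hdisj, ?_⟩
    rw [Subgraph.isSpanning_iff, Subgraph.verts_sup, hMverts, subgraphOfAdj_verts]
    exact Set.compl_union_self _

end Aux

theorem stmt16 {V : Type*} [Fintype V] (T : SimpleGraph V) (hT : T.IsTree)
    (h : Fintype.card V = 2 * _root_.indepNum T) :
    ∃ M : T.Subgraph, M.IsPerfectMatching := by
  exact main_aux (Fintype.card V) V T hT.2 rfl h
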